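/- There is an absolute constant C > 0 such that for any three points x, y, z in the open unit disk 𝔻, | 𝔼[ 𝐆(x)·(𝐆(y) − 𝐆(z)) ] | ≤ d_H(y,z)/2 + C; equivalently, | log( |1 − x·conj(z)| / |1 − x·conj(y)| ) | ≤ d_H(y,z) + 2C. -/

import Mathlib

noncomputable section

/-- The hyperbolic disk automorphism `T_y(z) = (z − y)/(1 − z ȳ)`. -/
def Tmap (y z : ℂ) : ℂ := (z - y) / (1 - z * (starRingEnd ℂ) y)

/-- The hyperbolic (Poincaré) metric on the unit disk. -/
def dH (y z : ℂ) : ℝ :=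
  Real.log ((1 + ‖Tmap y z‖) / (1 - ‖Tmap y z‖))

/-- The covariance of the Gaussian field `𝐆`: `𝔼[𝐆(z)𝐆(y)] = −(1/2) log |1 − z ȳ|`. -/
def Gcov (z y : ℂ) : ℝ := -Real.log (‖1 - z * (starRingEnd ℂ) y‖) / 2

private lemma normSq_id (a b : ℂ) :
    Complex.normSq (1 - a * (starRingEnd ℂ) b) - Complex.normSq (a - b)
      = (1 - Complex.normSq a) * (1 - Complex.normSq b) := by
  simp [Complex.normSq_apply, Complex.mul_re, Complex.mul_im, Complex.sub_re, Complex.sub_im,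
    Complex.one_re, Complex.one_im, Complex.conj_re, Complex.conj_im]
  ring

private lemma sq_id (a b : ℂ) :
    ‖1 - a * (starRingEnd ℂ) b‖ ^ 2 - ‖a - b‖ ^ 2
      = (1 - ‖a‖ ^ 2) * (1 - ‖b‖ ^ 2) := by
  simpa [Complex.sq_norm] using normSq_id a b

private lemma lb (a b : ℂ) :
    1 - ‖a‖ * ‖b‖ ≤ ‖1 - a * (starRingEnd ℂ) b‖ := by
  calc 1 - ‖a‖ * ‖b‖
      = ‖(1 : ℂ)‖ - ‖a * (starRingEnd ℂ) b‖ := by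
        simp [norm_mul]
    _ ≤ ‖1 - a * (starRingEnd ℂ) b‖ := by
        simpa using norm_sub_norm_le (1 : ℂ) (a * (starRingEnd ℂ) b)

private lemma Dpos (y z : ℂ) (hy : ‖y‖ < 1) (hz : ‖z‖ < 1) :
    0 < ‖1 - z * (starRingEnd ℂ) y‖ := by
  have h1 : ‖z‖ * ‖y‖ < 1 := by
    nlinarith [norm_nonneg z, norm_nonneg y]
  linarith [lb z y]

private lemma E_lt_D (y z : ℂ) (hy : ‖y‖ < 1) (hz : ‖z‖ < 1) :
    ‖z - y‖ < ‖1 - z * (starRingEnd ℂ) y‖ := by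
  have hD := Dpos y z hy hz
  have h := sq_id z y
  have hp : 0 < (1 - ‖z‖ ^ 2) * (1 - ‖y‖ ^ 2) := by
    apply mul_pos <;> nlinarith [norm_nonneg z, norm_nonneg y]
  have h2 : ‖z - y‖ ^ 2 < ‖1 - z * (starRingEnd ℂ) y‖ ^ 2 := by
    linarith
  exact lt_of_pow_lt_pow_left₀ 2 hD.le h2

private lemma tmap_abs (y z : ℂ) :
    ‖Tmap y z‖
      = ‖z - y‖ / ‖1 - z * (starRingEnd ℂ) y‖ := by
  rw [Tmap, norm_div]

private lemma tmap_lt_one (y z : ℂ) (hy : ‖y‖ < 1) (hz : ‖z‖ < 1) :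
    ‖Tmap y z‖ < 1 := by
  rw [tmap_abs, div_lt_one (Dpos y z hy hz)]
  exact E_lt_D y z hy hz

private lemma tmap_symm (y z : ℂ) :
    ‖Tmap z y‖ = ‖Tmap y z‖ := by
  rw [tmap_abs, tmap_abs]
  congr 1
  · exact norm_sub_rev y z
  · rw [← Complex.norm_conj (1 - y * (starRingEnd ℂ) z)]
    congr 1
    simp [map_sub, map_mul, mul_comm]

private lemma cid (x y z : ℂ) :
    (1 - y * (starRingEnd ℂ) y) * (1 - x * (starRingEnd ℂ) z)
      = (1 - x * (starRingEnd ℂ) y) * (1 - (starRingEnd ℂ) z * y)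
        - (x - y) * ((starRingEnd ℂ) z - (starRingEnd ℂ) y) := by
  ring

private lemma key (x y z : ℂ) (hx : ‖x‖ < 1) (hy : ‖y‖ < 1)
    (hz : ‖z‖ < 1) :
    (1 - ‖Tmap y z‖) * ‖1 - x * (starRingEnd ℂ) z‖
      ≤ 2 * ‖1 - x * (starRingEnd ℂ) y‖ := by
  set A := ‖1 - x * (starRingEnd ℂ) z‖ with hA
  set B := ‖1 - x * (starRingEnd ℂ) y‖ with hB
  set D := ‖1 - z * (starRingEnd ℂ) y‖ with hDdef
  set E := ‖z - y‖ with hE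
  have hD : 0 < D := Dpos y z hy hz
  have ht : ‖Tmap y z‖ = E / D := tmap_abs y z
  have hF2 : D ^ 2 - E ^ 2 = (1 - ‖z‖ ^ 2) * (1 - ‖y‖ ^ 2) := sq_id z y
  have hBnn : (0:ℝ) ≤ B := norm_nonneg _
  have hAnn : (0:ℝ) ≤ A := norm_nonneg _
  have hEnn : (0:ℝ) ≤ E := norm_nonneg _
  have hy2 : (0:ℝ) < 1 - ‖y‖ ^ 2 := by nlinarith [norm_nonneg y]
  have hF4 : ‖x - y‖ ≤ B := by
    have h := sq_id x y
    have hp : 0 ≤ (1 - ‖x‖ ^ 2) * (1 - ‖y‖ ^ 2) := by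
      apply mul_nonneg <;> nlinarith [norm_nonneg x, norm_nonneg y]
    have h2 : ‖x - y‖ ^ 2 ≤ B ^ 2 := by rw [hB]; linarith
    exact le_of_pow_le_pow_left₀ (by norm_num) hBnn h2
  have hD' : ‖1 - (starRingEnd ℂ) z * y‖ = D := by
    rw [hDdef, ← Complex.norm_conj (1 - z * (starRingEnd ℂ) y)]
    congr 1
    simp [map_sub, map_mul, mul_comm]
  have hE' : ‖(starRingEnd ℂ) z - (starRingEnd ℂ) y‖ = E := by
    rw [hE, ← Complex.norm_conj (z - y)]
    congr 1
    simp [map_sub]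
  have hyy : ‖1 - y * (starRingEnd ℂ) y‖ = 1 - ‖y‖ ^ 2 := by
    have h1 : (1 : ℂ) - y * (starRingEnd ℂ) y = ((1 - Complex.normSq y : ℝ) : ℂ) := by
      rw [Complex.mul_conj]; push_cast; ring
    rw [h1, Complex.norm_real, Real.norm_eq_abs, ← Complex.sq_norm, abs_of_nonneg hy2.le]
  have hmain : (1 - ‖y‖ ^ 2) * A ≤ B * D + B * E := by
    have h1 : (1 - ‖y‖ ^ 2) * A
        = ‖(1 - x * (starRingEnd ℂ) y) * (1 - (starRingEnd ℂ) z * y)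
            - (x - y) * ((starRingEnd ℂ) z - (starRingEnd ℂ) y)‖ := by
      rw [← cid, norm_mul, hyy]
    rw [h1]
    calc ‖_‖ ≤ ‖(1 - x * (starRingEnd ℂ) y) * (1 - (starRingEnd ℂ) z * y)‖
          + ‖(x - y) * ((starRingEnd ℂ) z - (starRingEnd ℂ) y)‖ := by
          apply norm_sub_le
      _ ≤ B * D + B * E := by
          rw [norm_mul, norm_mul, hD', hE']
          have h2 : ‖x - y‖ * E ≤ B * E :=
            mul_le_mul_of_nonneg_right hF4 hEnn
          linarith
  have hED : E ≤ D := (E_lt_D y z hy hz).le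
  have hDlow : 1 - ‖z‖ ≤ D := by
    calc 1 - ‖z‖ ≤ 1 - ‖z‖ * ‖y‖ := by
          nlinarith [norm_nonneg z, norm_nonneg y]
      _ ≤ D := lb z y
  have h5 : B * (1 - ‖z‖ ^ 2) ≤ 2 * B * D := by
    nlinarith [mul_nonneg hBnn (sq_nonneg (1 - ‖z‖)),
      mul_le_mul_of_nonneg_left hDlow (by linarith : (0:ℝ) ≤ 2 * B)]
  rw [ht]
  rw [show (1 : ℝ) - E / D = (D - E) / D by field_simp]
  rw [div_mul_eq_mul_div, div_le_iff₀ hD]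
  -- (D - E) * A ≤ 2 * B * D
  have h1' : (D - E) * ((1 - ‖y‖ ^ 2) * A) ≤ (D - E) * (B * D + B * E) :=
    mul_le_mul_of_nonneg_left hmain (by linarith)
  have h2' : (D - E) * (B * D + B * E) = B * (D ^ 2 - E ^ 2) := by ring
  have h3' : B * (D ^ 2 - E ^ 2) = B * (1 - ‖z‖ ^ 2) * (1 - ‖y‖ ^ 2) := by
    rw [hF2]; ring
  have h6 : (D - E) * A * (1 - ‖y‖ ^ 2) ≤ 2 * B * D * (1 - ‖y‖ ^ 2) := by
    calc (D - E) * A * (1 - ‖y‖ ^ 2)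
        = (D - E) * ((1 - ‖y‖ ^ 2) * A) := by ring
      _ ≤ B * (1 - ‖z‖ ^ 2) * (1 - ‖y‖ ^ 2) := by
          rw [← h3', ← h2']; exact h1'
      _ ≤ 2 * B * D * (1 - ‖y‖ ^ 2) :=
          mul_le_mul_of_nonneg_right h5 hy2.le
  exact le_of_mul_le_mul_right h6 hy2

private lemma dH_symm (y z : ℂ) : dH z y = dH y z := by
  rw [dH, dH, tmap_symm]

private lemma log_bound (x y z : ℂ) (hx : ‖x‖ < 1) (hy : ‖y‖ < 1)
    (hz : ‖z‖ < 1) :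
    Real.log (‖1 - x * (starRingEnd ℂ) z‖)
      - Real.log (‖1 - x * (starRingEnd ℂ) y‖) ≤ dH y z + Real.log 2 := by
  set A := ‖1 - x * (starRingEnd ℂ) z‖ with hAdef
  set B := ‖1 - x * (starRingEnd ℂ) y‖ with hBdef
  set t := ‖Tmap y z‖ with htdef
  have hA : 0 < A := Dpos z x hz hx
  have hB : 0 < B := Dpos y x hy hx
  have ht0 : 0 ≤ t := norm_nonneg _
  have ht1 : t < 1 := tmap_lt_one y z hy hz
  have hkey : (1 - t) * A ≤ 2 * B := key x y z hx hy hz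
  have h1t : (0:ℝ) < 1 - t := by linarith
  have hlog : Real.log ((1 - t) * A) ≤ Real.log (2 * B) :=
    Real.log_le_log (by positivity) hkey
  rw [Real.log_mul h1t.ne' hA.ne', Real.log_mul (by norm_num) hB.ne'] at hlog
  have hdH : dH y z = Real.log (1 + t) - Real.log (1 - t) := by
    rw [dH, ← htdef, Real.log_div (by linarith) h1t.ne']
  have hpos : 0 ≤ Real.log (1 + t) := Real.log_nonneg (by linarith)
  linarith

/-- There is an absolute constant `C > 0` so that for any `x, y, z ∈ 𝔻`,
`|𝔼[𝐆(x)(𝐆(y) − 𝐆(z))]| ≤ d_H(y,z)/2 + C`; equivalently,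
`|log(|1 − x z̄| / |1 − x ȳ|)| ≤ d_H(y,z) + 2C`. -/
theorem stmt_7 :
    ∃ C > (0 : ℝ), ∀ x y z : ℂ,
      ‖x‖ < 1 → ‖y‖ < 1 → ‖z‖ < 1 →
      |Gcov x y - Gcov x z| ≤ dH y z / 2 + C ∧
      |Real.log (‖1 - x * (starRingEnd ℂ) z‖
          / ‖1 - x * (starRingEnd ℂ) y‖)| ≤ dH y z + 2 * C := by
  refine ⟨Real.log 2, Real.log_pos (by norm_num), ?_⟩
  intro x y z hx hy hz
  set A := ‖1 - x * (starRingEnd ℂ) z‖ with hAdef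
  set B := ‖1 - x * (starRingEnd ℂ) y‖ with hBdef
  have hA : 0 < A := Dpos z x hz hx
  have hB : 0 < B := Dpos y x hy hx
  have h1 : Real.log A - Real.log B ≤ dH y z + Real.log 2 := log_bound x y z hx hy hz
  have h2 : Real.log B - Real.log A ≤ dH y z + Real.log 2 := by
    have := log_bound x z y hx hz hy
    rwa [dH_symm] at this
  have habs : |Real.log A - Real.log B| ≤ dH y z + Real.log 2 :=
    abs_le.mpr ⟨by linarith, h1⟩
  have hlog2 : (0:ℝ) < Real.log 2 := Real.log_pos (by norm_num)
  constructor
  · have heq : Gcov x y - Gcov x z = (Real.log A - Real.log B) / 2 := by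
      rw [Gcov, Gcov, ← hAdef, ← hBdef]; ring
    rw [heq, abs_div, abs_two]
    linarith [abs_nonneg (Real.log A - Real.log B)]
  · rw [Real.log_div hA.ne' hB.ne']
    linarith

end
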